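/- The cardinality of L satisfies (q^m−1)/m ≤ |L|, and if moreover m ≥ 2, then |L| < (q^m−1)/m + (1 − 1/m)·q^{m/2+1} (inequalities of real numbers). -/

import Mathlib

open Polynomial

noncomputable section

/-- The orbit of `j : ZMod N` under multiplication by `q`. -/
def qOrbit (N q : ℕ) (j : ZMod N) : Set (ZMod N) :=
  Set.range fun k : ℕ => (q : ZMod N) ^ k * j

/-- The set `L` of orbits of `ZMod N` under multiplication by `q`. -/
def orbitSet (N q : ℕ) : Set (Set (ZMod N)) :=
  {l | ∃ j : ZMod N, l = qOrbit N q j}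

section Aux

variable {N q m : ℕ}

lemma mem_qOrbit_self (j : ZMod N) : j ∈ qOrbit N q j := ⟨0, by simp⟩

lemma qOrbit_eq_of_mem (hm : 0 < m) (hq1 : (q : ZMod N) ^ m = 1)
    {i j : ZMod N} (hij : i ∈ qOrbit N q j) : qOrbit N q i = qOrbit N q j := by
  obtain ⟨k, rfl⟩ := hij
  have hk : k ≤ m * k := Nat.le_mul_of_pos_left k hm
  apply Set.eq_of_subset_of_subset
  · rintro x ⟨l, rfl⟩
    refine ⟨l + k, ?_⟩
    show (q : ZMod N) ^ (l + k) * j = (q : ZMod N) ^ l * ((q : ZMod N) ^ k * j)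
    rw [pow_add, mul_assoc]
  · rintro x ⟨l, rfl⟩
    refine ⟨l + (m * k - k), ?_⟩
    show (q : ZMod N) ^ (l + (m * k - k)) * ((q : ZMod N) ^ k * j) = (q : ZMod N) ^ l * j
    rw [← mul_assoc, ← pow_add, add_assoc, Nat.sub_add_cancel hk, pow_add, pow_mul, hq1,
      one_pow, mul_one]

lemma pow_mul_fix {j : ZMod N} {a : ℕ} (h : (q : ZMod N) ^ a * j = j) (t : ℕ) :
    (q : ZMod N) ^ (a * t) * j = j := by
  induction t with
  | zero => simp
  | succ t ih =>
      rw [Nat.mul_succ, pow_add, mul_assoc, h, ih]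

lemma pow_mod_fix {j : ZMod N} {a b : ℕ} (ha : (q : ZMod N) ^ a * j = j)
    (hb : (q : ZMod N) ^ b * j = j) : (q : ZMod N) ^ (b % a) * j = j := by
  conv_lhs => rw [← pow_mul_fix ha (b / a)]
  rw [← mul_assoc, ← pow_add]
  rw [Nat.mod_add_div b a] at *
  exact hb

lemma pow_gcd_fix {j : ZMod N} (a b : ℕ) (ha : (q : ZMod N) ^ a * j = j)
    (hb : (q : ZMod N) ^ b * j = j) : (q : ZMod N) ^ (Nat.gcd a b) * j = j := by
  induction a, b using Nat.gcd.induction with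
  | H0 n => simpa [Nat.gcd_zero_left] using hb
  | H1 a b hpos ih =>
      rw [Nat.gcd_rec]
      exact ih (pow_mod_fix ha hb) ha

/-- geometric sum bound -/
lemma geom_bound (hq : 2 ≤ q) : ∀ k : ℕ, (∑ d ∈ Finset.Icc 1 k, q ^ d) + q ≤ q ^ (k + 1) := by
  intro k
  induction k with
  | zero => simp
  | succ k ih =>
      rw [Finset.sum_Icc_succ_top (by omega)]
      have h1 : q ^ (k + 1) + q ^ (k + 1) ≤ q ^ (k + 1 + 1) := by
        calc q ^ (k+1) + q ^ (k+1) = 2 * q ^ (k+1) := by ring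
        _ ≤ q * q ^ (k+1) := Nat.mul_le_mul_right _ hq
        _ = q ^ (k+1+1) := by ring
      omega

end Aux

/-- `(q^m − 1)/m ≤ |L|`, and if `m ≥ 2` then
`|L| < (q^m − 1)/m + (1 − 1/m) q^{m/2 + 1}`. -/
theorem card_orbitSet_bounds (q m : ℕ) (hm : 0 < m) (hqm : Nat.Coprime q m)
    (F E : Type*) [Field F] [Field E] [Fintype F] [Fintype E] [Algebra F E]
    (hF : Fintype.card F = q) (hE : Fintype.card E = q ^ m)
    (β : E) (hβ : orderOf β = q ^ m - 1) :
    ((q : ℝ) ^ m - 1) / m ≤ (Nat.card (orbitSet (q ^ m - 1) q) : ℝ) ∧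
    (2 ≤ m → (Nat.card (orbitSet (q ^ m - 1) q) : ℝ) <
      ((q : ℝ) ^ m - 1) / m + (1 - 1 / (m : ℝ)) * (q : ℝ) ^ ((m : ℝ) / 2 + 1)) := by
  classical
  have hq2 : 2 ≤ q := by
    have h := Fintype.one_lt_card (α := F)
    omega
  set N := q ^ m - 1 with hNdef
  have hqm1 : 1 ≤ q ^ m := Nat.one_le_pow _ _ (by omega)
  have hqmm : 2 ≤ q ^ m := by
    calc 2 = 2 ^ 1 := rfl
    _ ≤ 2 ^ m := Nat.pow_le_pow_right (by omega) hm
    _ ≤ q ^ m := Nat.pow_le_pow_left hq2 m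
  have hN1 : 1 ≤ N := by omega
  haveI : NeZero N := ⟨by omega⟩
  -- q^m = 1 in ZMod N
  have hq1 : (q : ZMod N) ^ m = 1 := by
    have h1 : ((q ^ m : ℕ) : ZMod N) = ((N + 1 : ℕ) : ZMod N) := by rw [show N + 1 = q ^ m by omega]
    push_cast at h1
    simpa [ZMod.natCast_self] using h1
  -- q is a unit mod N
  have hu : IsUnit (q : ZMod N) := by
    rw [ZMod.isUnit_iff_coprime]
    have h1 : Nat.Coprime (q ^ m) N := by
      have h2 : Nat.Coprime (N + 1) N := by
        have h3 : Nat.gcd (N + 1) N = Nat.gcd 1 N := by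
          conv_lhs => rw [Nat.add_comm, Nat.gcd_add_self_left]
        simpa [Nat.Coprime] using h3
      rwa [show N + 1 = q ^ m by omega] at h2
    exact (Nat.coprime_pow_left_iff hm q N).mp h1
  set f : ZMod N → Set (ZMod N) := fun j => qOrbit N q j with hf
  have horbit_mem : ∀ i j : ZMod N, f i = f j ↔ i ∈ f j := by
    intro i j
    constructor
    · intro h; rw [← h]; exact mem_qOrbit_self i
    · intro h; exact qOrbit_eq_of_mem hm hq1 h
  set T : Finset (Set (ZMod N)) := Finset.univ.image f with hT
  have hcardL : Nat.card (orbitSet N q) = T.card := by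
    have : orbitSet N q = (T : Set (Set (ZMod N))) := by
      ext l
      simp [orbitSet, hT, eq_comm]
      exact Iff.rfl
    rw [this, Nat.card_coe_set_eq, Set.ncard_coe_finset]
  set g : Set (ZMod N) → ℕ := fun l => (Finset.univ.filter fun i => f i = l).card with hg
  -- the fiber over f j is the orbit of j as a finset
  have hfiber : ∀ j : ZMod N,
      (Finset.univ.filter fun i => f i = f j) =
        (Finset.range m).image fun k => (q : ZMod N) ^ k * j := by
    intro j
    ext i
    simp only [Finset.mem_filter, Finset.mem_univ, true_and, Finset.mem_image, Finset.mem_range]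
    rw [horbit_mem]
    constructor
    · rintro ⟨k, rfl⟩
      refine ⟨k % m, Nat.mod_lt _ hm, ?_⟩
      show (q : ZMod N) ^ (k % m) * j = (q : ZMod N) ^ k * j
      conv_rhs => rw [← Nat.mod_add_div k m]
      rw [pow_add, pow_mul, hq1, one_pow, mul_one]
    · rintro ⟨k, _, rfl⟩
      exact ⟨k, rfl⟩
  have hg_le : ∀ j : ZMod N, g (f j) ≤ m := by
    intro j
    rw [hg]
    simp only
    rw [hfiber j]
    exact (Finset.card_image_le).trans (by simp)
  have hg_pos : ∀ j : ZMod N, 1 ≤ g (f j) := by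
    intro j
    rw [hg]
    exact Finset.card_pos.mpr ⟨j, by simp⟩
  have hsum : N = ∑ l ∈ T, g l := by
    calc N = Fintype.card (ZMod N) := (ZMod.card N).symm
    _ = (Finset.univ : Finset (ZMod N)).card := (Finset.card_univ).symm
    _ = ∑ l ∈ T, g l := Finset.card_eq_sum_card_image f (Finset.univ : Finset (ZMod N))
  -- lower bound (ℕ)
  have hlowN : N ≤ T.card * m := by
    calc N = ∑ l ∈ T, g l := hsum
    _ ≤ ∑ l ∈ T, m := by
          apply Finset.sum_le_sum
          intro l hl
          obtain ⟨j, _, rfl⟩ := Finset.mem_image.mp hl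
          exact hg_le j
    _ = T.card * m := by rw [Finset.sum_const, smul_eq_mul]
  have hNcast : ((N : ℕ) : ℝ) = (q : ℝ) ^ m - 1 := by
    rw [hNdef, Nat.cast_sub hqm1]
    push_cast
    ring
  have hmR : (0 : ℝ) < m := by exact_mod_cast hm
  have hTcard : Nat.card (orbitSet (q ^ m - 1) q) = T.card := hcardL
  constructor
  · rw [hTcard]
    rw [div_le_iff₀ hmR, ← hNcast]
    exact_mod_cast hlowN
  -- upper bound
  intro hm2
  -- the set of elements in small orbits
  set S : Finset (ZMod N) := Finset.univ.filter (fun j => g (f j) < m) with hS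
  set Ts : Finset (Set (ZMod N)) := T.filter (fun l => g l < m) with hTs
  -- m * T.card ≤ N + (m-1) * S.card
  have hupN : m * T.card ≤ N + (m - 1) * S.card := by
    have hSsum : S.card = ∑ l ∈ Ts, g l := by
      have hmaps : ∀ j ∈ S, f j ∈ Ts := by
        intro j hj
        rw [hS, Finset.mem_filter] at hj
        rw [hTs, Finset.mem_filter]
        exact ⟨Finset.mem_image_of_mem f (Finset.mem_univ j), hj.2⟩
      rw [Finset.card_eq_sum_card_fiberwise hmaps]
      apply Finset.sum_congr rfl
      intro l hl
      rw [hTs, Finset.mem_filter] at hl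
      congr 1
      ext i
      simp only [Finset.mem_filter, Finset.mem_univ, true_and, hS]
      constructor
      · rintro ⟨_, h⟩; exact h
      · rintro rfl; exact ⟨hl.2, rfl⟩
    have hTs_le : Ts.card ≤ S.card := by
      rw [hSsum]
      calc Ts.card = ∑ l ∈ Ts, 1 := by simp
      _ ≤ ∑ l ∈ Ts, g l := by
            apply Finset.sum_le_sum
            intro l hl
            rw [hTs, Finset.mem_filter, hT] at hl
            obtain ⟨j, _, rfl⟩ := Finset.mem_image.mp hl.1
            exact hg_pos j
    have key : m * T.card ≤ N + (m - 1) * Ts.card := by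
      have h1 : ∑ l ∈ T, (m - g l) ≤ (m - 1) * Ts.card := by
        calc ∑ l ∈ T, (m - g l) = ∑ l ∈ Ts, (m - g l) := by
              rw [hTs]
              rw [Finset.sum_filter_of_ne]
              intro l hl h
              obtain ⟨j, _, rfl⟩ := Finset.mem_image.mp (hT ▸ hl)
              have := hg_le j
              omega
        _ ≤ ∑ l ∈ Ts, (m - 1) := by
              apply Finset.sum_le_sum
              intro l hl
              rw [hTs, Finset.mem_filter] at hl
              obtain ⟨j, _, rfl⟩ := Finset.mem_image.mp (hT ▸ hl.1)
              have := hg_pos j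
              omega
        _ = (m - 1) * Ts.card := by rw [Finset.sum_const, smul_eq_mul, mul_comm]
      have h2 : m * T.card = ∑ l ∈ T, g l + ∑ l ∈ T, (m - g l) := by
        rw [← Finset.sum_add_distrib]
        rw [Finset.sum_congr rfl (fun l hl => ?_), Finset.sum_const, smul_eq_mul, mul_comm]
        obtain ⟨j, _, rfl⟩ := Finset.mem_image.mp (hT ▸ hl)
        have := hg_le j
        omega
      rw [h2, ← hsum]
      omega
    calc m * T.card ≤ N + (m - 1) * Ts.card := key
    _ ≤ N + (m - 1) * S.card := by
          have := hTs_le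
          exact Nat.add_le_add_left (Nat.mul_le_mul_left _ this) N
  -- bound on S.card
  have hA : ∀ d : ℕ, 0 < d →
      (Finset.univ.filter fun j : ZMod N => (q : ZMod N) ^ d * j = j).card ≤ q ^ d := by
    intro d hd
    set n := q ^ d with hn
    have hn2 : 2 ≤ n := by
      calc 2 = 2 ^ 1 := rfl
      _ ≤ 2 ^ d := Nat.pow_le_pow_right (by omega) hd
      _ ≤ q ^ d := Nat.pow_le_pow_left hq2 d
    set p : Polynomial E := X ^ n - X with hp
    have hpdeg : p.natDegree = n := by
      rw [hp]
      rw [natDegree_sub_eq_left_of_natDegree_lt]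
      · exact natDegree_X_pow n
      · rw [natDegree_X_pow, natDegree_X]; omega
    have hpne : p ≠ 0 := by
      intro h
      rw [h, natDegree_zero] at hpdeg
      omega
    have hfin : IsOfFinOrder β := by
      rw [← orderOf_pos_iff, hβ]
      omega
    have hβu : IsUnit β := hfin.isUnit
    set u : Eˣ := hβu.unit with hudef
    have hucoe : (u : E) = β := hβu.unit_spec
    have huord : orderOf u = N := by
      rw [← hβ, ← hucoe, orderOf_units]
    set φ : ZMod N → E := fun j => β ^ j.val with hφ
    have hφinj : Set.InjOn φ Set.univ := by
      intro a _ b _ hab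
      have hab1 : β ^ a.val = β ^ b.val := hab
      have hab2 : u ^ a.val = u ^ b.val := by
        apply Units.ext
        rw [Units.val_pow_eq_pow_val, Units.val_pow_eq_pow_val, hucoe]
        exact hab1
      rw [pow_eq_pow_iff_modEq, huord] at hab2
      have ha := ZMod.val_lt a
      have hb := ZMod.val_lt b
      have : a.val = b.val := Nat.ModEq.eq_of_lt_of_lt hab2 (by omega) (by omega)
      have h2 : ((a.val : ℕ) : ZMod N) = ((b.val : ℕ) : ZMod N) := by rw [this]
      simpa using h2
    have hsub : ∀ j ∈ (Finset.univ.filter fun j : ZMod N => (q : ZMod N) ^ d * j = j),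
        φ j ∈ p.roots.toFinset := by
      intro j hj
      rw [Finset.mem_filter] at hj
      have hj2 : (q : ZMod N) ^ d * j = j := hj.2
      have hl : ((j.val * n : ℕ) : ZMod N) = (j : ZMod N) * (q : ZMod N) ^ d := by
        push_cast [hn]
        simp [ZMod.natCast_val, ZMod.cast_id]
      have hcast : ((j.val * n : ℕ) : ZMod N) = ((j.val : ℕ) : ZMod N) := by
        rw [hl, mul_comm, hj2]
        simp [ZMod.natCast_val, ZMod.cast_id]
      rw [ZMod.natCast_eq_natCast_iff] at hcast
      have hrootu : u ^ (j.val * n) = u ^ j.val := by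
        rw [pow_eq_pow_iff_modEq, huord]
        exact hcast
      have hroot : φ j ^ n = φ j := by
        show (β ^ j.val) ^ n = β ^ j.val
        have := congrArg (Units.val) hrootu
        rw [Units.val_pow_eq_pow_val, Units.val_pow_eq_pow_val, hucoe] at this
        rw [← pow_mul]
        exact this
      rw [Multiset.mem_toFinset, mem_roots hpne, hp]
      simp [IsRoot, hroot]
    calc (Finset.univ.filter fun j : ZMod N => (q : ZMod N) ^ d * j = j).card
        = ((Finset.univ.filter fun j : ZMod N => (q : ZMod N) ^ d * j = j).image φ).card := by
          rw [Finset.card_image_of_injOn (hφinj.mono (Set.subset_univ _))]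
    _ ≤ p.roots.toFinset.card := by
          apply Finset.card_le_card
          intro x hx
          obtain ⟨j, hj, rfl⟩ := Finset.mem_image.mp hx
          exact hsub j hj
    _ ≤ Multiset.card p.roots := Multiset.toFinset_card_le _
    _ ≤ p.natDegree := card_roots' p
    _ = n := hpdeg
  -- S is contained in the union of A_d over proper divisors
  have hSsub : S ⊆ m.properDivisors.biUnion
      (fun d => Finset.univ.filter fun j : ZMod N => (q : ZMod N) ^ d * j = j) := by
    intro j hj
    rw [hS, Finset.mem_filter] at hj
    have hsmall : g (f j) < m := hj.2
    -- find a collision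
    have hcol : ∃ a b, a < m ∧ b < m ∧ a ≠ b ∧
        (q : ZMod N) ^ a * j = (q : ZMod N) ^ b * j := by
      by_contra hno
      push_neg at hno
      have hinj : Set.InjOn (fun k => (q : ZMod N) ^ k * j) (Finset.range m : Set ℕ) := by
        intro a ha b hb hab
        simp only [Finset.coe_range, Set.mem_Iio] at ha hb
        by_contra hne
        exact hno a b ha hb hne hab
      have := Finset.card_image_of_injOn hinj
      rw [hg] at hsmall
      simp only at hsmall
      rw [hfiber j, this, Finset.card_range] at hsmall
      omega
    obtain ⟨a, b, ha, hb, hab, heq⟩ := hcol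
    -- wlog a < b
    have hcol2 : ∃ e, 0 < e ∧ e < m ∧ (q : ZMod N) ^ e * j = j := by
      rcases Nat.lt_or_ge a b with h | h
      · refine ⟨b - a, by omega, by omega, ?_⟩
        have : (q : ZMod N) ^ a * ((q : ZMod N) ^ (b - a) * j) = (q : ZMod N) ^ a * j := by
          rw [← mul_assoc, ← pow_add, Nat.add_sub_cancel' (le_of_lt h)]
          exact heq.symm
        exact (hu.pow a).mul_left_cancel this
      · have h' : b < a := by omega
        refine ⟨a - b, by omega, by omega, ?_⟩
        have : (q : ZMod N) ^ b * ((q : ZMod N) ^ (a - b) * j) = (q : ZMod N) ^ b * j := by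
          rw [← mul_assoc, ← pow_add, Nat.add_sub_cancel' (le_of_lt h')]
          exact heq
        exact (hu.pow b).mul_left_cancel this
    obtain ⟨e, he0, hem, hej⟩ := hcol2
    have hmj : (q : ZMod N) ^ m * j = j := by rw [hq1, one_mul]
    have hgcd := pow_gcd_fix e m hej hmj
    rw [Finset.mem_biUnion]
    refine ⟨Nat.gcd e m, ?_, by simp [hgcd]⟩
    rw [Nat.mem_properDivisors]
    constructor
    · exact Nat.gcd_dvd_right e m
    · calc Nat.gcd e m ≤ e := Nat.gcd_le_left m he0
      _ < m := hem
  have hScard : S.card < q ^ (m / 2 + 1) := by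
    have h1 : S.card ≤ ∑ d ∈ m.properDivisors, q ^ d := by
      calc S.card ≤ (m.properDivisors.biUnion
            (fun d => Finset.univ.filter fun j : ZMod N => (q : ZMod N) ^ d * j = j)).card :=
            Finset.card_le_card hSsub
      _ ≤ ∑ d ∈ m.properDivisors,
            (Finset.univ.filter fun j : ZMod N => (q : ZMod N) ^ d * j = j).card :=
            Finset.card_biUnion_le
      _ ≤ ∑ d ∈ m.properDivisors, q ^ d := by
            apply Finset.sum_le_sum
            intro d hd
            exact hA d (Nat.pos_of_mem_properDivisors hd)
    have h2 : ∑ d ∈ m.properDivisors, q ^ d ≤ ∑ d ∈ Finset.Icc 1 (m / 2), q ^ d := by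
      apply Finset.sum_le_sum_of_subset
      intro d hd
      rw [Nat.mem_properDivisors] at hd
      rw [Finset.mem_Icc]
      constructor
      · have := Nat.pos_of_mem_properDivisors (Nat.mem_properDivisors.mpr hd)
        omega
      · obtain ⟨c, hc⟩ := hd.1
        rcases Nat.lt_or_ge c 2 with h2 | h2
        · interval_cases c
          · rw [mul_zero] at hc; omega
          · rw [mul_one] at hc; omega
        · have : 2 * d ≤ m := by
            calc 2 * d = d * 2 := by ring
            _ ≤ d * c := Nat.mul_le_mul_left d h2
            _ = m := hc.symm
          omega
    have h3 := geom_bound hq2 (m / 2)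
    omega
  -- assemble over ℝ
  rw [hTcard]
  have hmR1 : (1 : ℝ) ≤ m := by exact_mod_cast hm
  have hq1R : (1 : ℝ) ≤ (q : ℝ) := by exact_mod_cast (by omega : 1 ≤ q)
  have hSQ : (S.card : ℝ) < (q : ℝ) ^ ((m : ℝ) / 2 + 1) := by
    calc (S.card : ℝ) < ((q ^ (m / 2 + 1) : ℕ) : ℝ) := by exact_mod_cast hScard
    _ = (q : ℝ) ^ ((m / 2 + 1 : ℕ) : ℝ) := by
          rw [Real.rpow_natCast]; push_cast; ring
    _ ≤ (q : ℝ) ^ ((m : ℝ) / 2 + 1) := by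
          apply Real.rpow_le_rpow_of_exponent_le hq1R
          push_cast
          have := Nat.cast_div_le (α := ℝ) (m := m) (n := 2)
          push_cast at this
          linarith
  have hup : (T.card : ℝ) ≤ ((q : ℝ) ^ m - 1) / m + (1 - 1 / (m : ℝ)) * S.card := by
    have h1 : (m : ℝ) * T.card ≤ (N : ℝ) + ((m : ℝ) - 1) * S.card := by
      have := hupN
      have hcast : ((m - 1 : ℕ) : ℝ) = (m : ℝ) - 1 := by
        rw [Nat.cast_sub (by omega)]; simp
      calc (m : ℝ) * T.card ≤ ((N + (m - 1) * S.card : ℕ) : ℝ) := by exact_mod_cast this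
      _ = (N : ℝ) + ((m : ℝ) - 1) * S.card := by push_cast [hcast]; ring
    rw [hNcast] at h1
    rw [div_add' _ _ _ (ne_of_gt hmR)]
    rw [le_div_iff₀ hmR]
    calc (T.card : ℝ) * m = (m : ℝ) * T.card := by ring
    _ ≤ ((q : ℝ) ^ m - 1) + ((m : ℝ) - 1) * S.card := h1
    _ = (q : ℝ) ^ m - 1 + (1 - 1 / ↑m) * ↑S.card * ↑m := by
          have hne : (m : ℝ) ≠ 0 := ne_of_gt hmR
          field_simp
  have hpos : (0 : ℝ) < 1 - 1 / (m : ℝ) := by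
    have : (2 : ℝ) ≤ m := by exact_mod_cast hm2
    have h1 : 1 / (m : ℝ) ≤ 1 / 2 := by
      apply div_le_div_of_nonneg_left <;> linarith
    linarith
  calc (T.card : ℝ) ≤ ((q : ℝ) ^ m - 1) / m + (1 - 1 / (m : ℝ)) * S.card := hup
  _ < ((q : ℝ) ^ m - 1) / m + (1 - 1 / (m : ℝ)) * (q : ℝ) ^ ((m : ℝ) / 2 + 1) := by
      have := mul_lt_mul_of_pos_left hSQ hpos
      linarith
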